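/- For the function ℓ^N(x) = C(d)N^{dδ} if |x| < N^{-δ} and ℓ^N(x) = C(d)/|x|^d if |x| ≥ N^{-δ}, and any ρ ∈ L^1 ∩ L^∞(ℝ^d) with ρ ≥ 0, the convolution satisfies ‖ℓ^N ⋆ ρ‖_{L^∞} ≤ C(1 + log N)(‖ρ‖_{L^1} + ‖ρ‖_{L^∞}) for a constant C depending only on d and δ. -/

import Mathlib

open MeasureTheory Real Set
open scoped ENNReal NNReal

noncomputable section

/-- The function `ℓ^N` with constant `Cd`. -/
def ellN (d N : ℕ) (δ Cd : ℝ) (x : EuclideanSpace ℝ (Fin d)) : ℝ :=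
  if (N : ℝ) ^ (-δ) ≤ ‖x‖ then Cd / ‖x‖ ^ d else Cd * (N : ℝ) ^ ((d : ℝ) * δ)

section helpers

variable {d N : ℕ} {δ Cd : ℝ}

lemma ellN_pos (hCd : 0 < Cd) (hN : 2 ≤ N) (x : EuclideanSpace ℝ (Fin d)) :
    0 < ellN d N δ Cd x := by
  have hN1 : (1:ℝ) < (N:ℝ) := by exact_mod_cast hN.trans_lt' one_lt_two
  unfold ellN
  split_ifs with h
  · have ha : (0:ℝ) < (N : ℝ) ^ (-δ) := Real.rpow_pos_of_pos (by linarith) _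
    exact div_pos hCd (pow_pos (lt_of_lt_of_le ha h) d)
  · exact mul_pos hCd (Real.rpow_pos_of_pos (by linarith) _)

lemma ellN_M_mul (hCd : 0 < Cd) (hN : 2 ≤ N) :
    (Cd * (N : ℝ) ^ ((d : ℝ) * δ)) * ((N : ℝ) ^ (-δ)) ^ d = Cd := by
  have hN0 : (0:ℝ) < (N:ℝ) := by positivity
  have h1 : ((N : ℝ) ^ (-δ)) ^ d = (N : ℝ) ^ ((-δ) * (d:ℝ)) := by
    rw [Real.rpow_mul hN0.le, Real.rpow_natCast]
  rw [h1, mul_assoc, ← Real.rpow_add hN0]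
  ring_nf
  rw [Real.rpow_zero, mul_one]

lemma ellN_le_M (hCd : 0 < Cd) (hN : 2 ≤ N) (x : EuclideanSpace ℝ (Fin d)) :
    ellN d N δ Cd x ≤ Cd * (N : ℝ) ^ ((d : ℝ) * δ) := by
  have hN0 : (0:ℝ) < (N:ℝ) := by positivity
  have ha : (0:ℝ) < (N : ℝ) ^ (-δ) := Real.rpow_pos_of_pos hN0 _
  unfold ellN
  split_ifs with h
  · have hM : Cd * (N : ℝ) ^ ((d : ℝ) * δ) = Cd / ((N : ℝ) ^ (-δ)) ^ d := by
      rw [eq_div_iff (by positivity)]; exact ellN_M_mul hCd hN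
    rw [hM]
    have hpow : ((N : ℝ) ^ (-δ)) ^ d ≤ ‖x‖ ^ d := by gcongr
    gcongr
  · exact le_refl _

lemma ellN_le_Cd (hCd : 0 < Cd) (hδ : 0 < δ) (hN : 2 ≤ N)
    (x : EuclideanSpace ℝ (Fin d)) (hx : 1 ≤ ‖x‖) :
    ellN d N δ Cd x ≤ Cd := by
  have hN1 : (1:ℝ) < (N:ℝ) := by exact_mod_cast hN.trans_lt' one_lt_two
  have ha1 : (N : ℝ) ^ (-δ) < 1 :=
    Real.rpow_lt_one_of_one_lt_of_neg hN1 (by linarith)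
  have h : (N : ℝ) ^ (-δ) ≤ ‖x‖ := le_trans ha1.le hx
  rw [ellN, if_pos h]
  have h1 : (1:ℝ) ≤ ‖x‖ ^ d := one_le_pow₀ hx
  exact div_le_self hCd.le h1

end helpers

lemma ellN_ball_integral (d N : ℕ) (hd : 2 ≤ d) (δ Cd : ℝ) (hδ : 0 < δ) (hCd : 0 < Cd)
    (hN : 2 ≤ N) :
    ∫ z in Metric.closedBall (0 : EuclideanSpace ℝ (Fin d)) 1, ellN d N δ Cd z
      = (volume (Metric.ball (0 : EuclideanSpace ℝ (Fin d)) 1)).toReal *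
        (Cd * (1 + (d : ℝ) * (δ * Real.log N))) := by
  haveI : Nontrivial (EuclideanSpace ℝ (Fin d)) := by
    have : Nonempty (Fin d) := ⟨⟨0, by omega⟩⟩
    infer_instance
  have hN0 : (0:ℝ) < (N:ℝ) := by positivity
  have hN1 : (1:ℝ) < (N:ℝ) := by exact_mod_cast hN.trans_lt' one_lt_two
  set a : ℝ := (N:ℝ) ^ (-δ) with ha_def
  set M : ℝ := Cd * (N:ℝ) ^ ((d : ℝ) * δ) with hM_def
  have ha : 0 < a := Real.rpow_pos_of_pos hN0 _
  have ha1 : a < 1 := Real.rpow_lt_one_of_one_lt_of_neg hN1 (by linarith)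
  have hM0 : 0 < M := by positivity
  have hMa : M * a ^ d = Cd := ellN_M_mul hCd hN
  have hd1 : d - 1 + 1 = d := by omega
  set G : ℝ → ℝ := fun r => if r ≤ 1 then (if a ≤ r then Cd / r ^ d else M) else 0 with hG_def
  have hind : ∀ z : EuclideanSpace ℝ (Fin d),
      (Metric.closedBall (0 : EuclideanSpace ℝ (Fin d)) 1).indicator (ellN d N δ Cd) z
        = G ‖z‖ := by
    intro z
    by_cases h : ‖z‖ ≤ 1
    · rw [Set.indicator_of_mem (by simpa [mem_closedBall_zero_iff] using h)]
      simp only [hG_def, if_pos h, ellN]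
      rfl
    · rw [Set.indicator_of_notMem (by simpa [mem_closedBall_zero_iff] using h)]
      simp only [hG_def, if_neg h]
  have step1 : ∫ z in Metric.closedBall (0 : EuclideanSpace ℝ (Fin d)) 1, ellN d N δ Cd z
      = ∫ z : EuclideanSpace ℝ (Fin d), G ‖z‖ := by
    rw [← integral_indicator measurableSet_closedBall]
    exact integral_congr_ae (Filter.Eventually.of_forall hind)
  rw [step1, integral_fun_norm_addHaar volume G, finrank_euclideanSpace_fin]
  -- now compute the 1D integral
  have hGmeas : Measurable G := by
    apply Measurable.ite (measurableSet_le measurable_id measurable_const)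
    · exact Measurable.ite (measurableSet_le measurable_const measurable_id)
        (measurable_const.div (measurable_id.pow_const d)) measurable_const
    · exact measurable_const
  have hfmeas : Measurable (fun y : ℝ => y ^ (d - 1) * G y) :=
    (measurable_id.pow_const _).mul hGmeas
  have hGM : ∀ y : ℝ, 0 < y → G y ≤ M := by
    intro y hy
    simp only [hG_def]
    split_ifs with h1 h2
    · have hM' : M = Cd / a ^ d := by rw [eq_div_iff (by positivity)]; exact hMa
      rw [hM']
      have hpow : a ^ d ≤ y ^ d := by gcongr
      gcongr
    · exact le_refl M
    · exact hM0.le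
  have hG0 : ∀ y : ℝ, 0 < y → 0 ≤ G y := by
    intro y hy
    simp only [hG_def]
    split_ifs with h1 h2
    · positivity
    · exact hM0.le
    · exact le_refl 0
  -- integrability on pieces
  have int01 : IntegrableOn (fun y : ℝ => y ^ (d - 1) * G y) (Ioc (0:ℝ) 1) volume := by
    apply Measure.integrableOn_of_bounded (M := M) measure_Ioc_lt_top.ne
      hfmeas.aestronglyMeasurable
    filter_upwards [ae_restrict_mem measurableSet_Ioc] with y hy
    have h1 : 0 ≤ y ^ (d - 1) * G y := mul_nonneg (pow_nonneg hy.1.le _) (hG0 y hy.1)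
    rw [Real.norm_eq_abs, abs_of_nonneg h1]
    calc y ^ (d - 1) * G y ≤ 1 * M := by
          apply mul_le_mul _ (hGM y hy.1) (hG0 y hy.1) zero_le_one
          calc y ^ (d - 1) ≤ 1 ^ (d - 1) := by gcongr; exacts [hy.1.le, hy.2]
          _ = 1 := one_pow _
    _ = M := one_mul M
  have hIoi1 : EqOn (fun y : ℝ => y ^ (d - 1) * G y) 0 (Ioi (1:ℝ)) := by
    intro y hy
    simp only [hG_def, if_neg (not_le.mpr (mem_Ioi.mp hy)), mul_zero, Pi.zero_apply]
  have int1i : IntegrableOn (fun y : ℝ => y ^ (d - 1) * G y) (Ioi (1:ℝ)) volume :=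
    (integrableOn_congr_fun hIoi1 measurableSet_Ioi).mpr (integrableOn_zero)
  have h3 : ∫ y in Ioi (1:ℝ), y ^ (d - 1) * G y = 0 := by
    rw [setIntegral_congr_fun measurableSet_Ioi hIoi1]; simp
  have int0a : IntegrableOn (fun y : ℝ => y ^ (d - 1) * G y) (Ioc (0:ℝ) a) volume :=
    int01.mono_set (Ioc_subset_Ioc le_rfl ha1.le)
  have inta1 : IntegrableOn (fun y : ℝ => y ^ (d - 1) * G y) (Ioc a 1) volume :=
    int01.mono_set (Ioc_subset_Ioc ha.le le_rfl)
  have piece1 : ∫ y in Ioc (0:ℝ) a, y ^ (d - 1) * G y = Cd / d := by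
    rw [integral_Ioc_eq_integral_Ioo]
    rw [setIntegral_congr_fun measurableSet_Ioo
      (g := fun y : ℝ => y ^ (d - 1) * M)
      (fun y hy => by
        simp only [hG_def]
        rw [if_pos (le_of_lt (lt_of_lt_of_le hy.2 ha1.le)), if_neg (not_le.mpr hy.2)])]
    rw [← integral_Ioc_eq_integral_Ioo, ← intervalIntegral.integral_of_le ha.le]
    rw [intervalIntegral.integral_mul_const, integral_pow, hd1]
    rw [zero_pow (by omega), sub_zero]
    have hc : ((d - 1 : ℕ) : ℝ) + 1 = (d:ℝ) := by
      rw [Nat.cast_sub (by omega : 1 ≤ d)]; ring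
    rw [div_mul_eq_mul_div, mul_comm, ← hMa, ← hc]
  have piece2 : ∫ y in Ioc a (1:ℝ), y ^ (d - 1) * G y = Cd * (δ * Real.log N) := by
    rw [setIntegral_congr_fun measurableSet_Ioc
      (g := fun y : ℝ => Cd * y⁻¹)
      (fun y hy => by
        have hy0 : 0 < y := lt_trans ha hy.1
        simp only [hG_def]
        rw [if_pos hy.2, if_pos hy.1.le]
        have h1 : y ^ d = y ^ (d - 1) * y := by rw [← pow_succ, hd1]
        rw [h1]
        field_simp)]
    rw [integral_const_mul, ← intervalIntegral.integral_of_le ha1.le,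
      integral_inv_of_pos ha one_pos]
    rw [ha_def, one_div, Real.log_inv, Real.log_rpow hN0]
    ring
  have hsplit2 : ∫ y in Ioc (0:ℝ) 1, y ^ (d - 1) * G y
      = Cd / d + Cd * (δ * Real.log N) := by
    rw [← Ioc_union_Ioc_eq_Ioc ha.le ha1.le,
      setIntegral_union (Set.Ioc_disjoint_Ioc_of_le le_rfl) measurableSet_Ioc int0a inta1,
      piece1, piece2]
  have key : ∫ y in Ioi (0:ℝ), y ^ (d - 1) • G y = Cd / d + Cd * (δ * Real.log N) := by
    simp only [smul_eq_mul]
    rw [← Ioc_union_Ioi_eq_Ioi (zero_le_one), 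
      setIntegral_union Set.Ioc_disjoint_Ioi_same measurableSet_Ioi int01 int1i,
      hsplit2, h3, add_zero]
  rw [key, nsmul_eq_mul, smul_eq_mul]
  have hd0 : (d:ℝ) ≠ 0 := by positivity
  have hgen : ∀ v T : ℝ, (d:ℝ) * (v * (T / d)) = v * T := by
    intro v T; field_simp
  have hT : Cd / d + Cd * (δ * Real.log N) = (Cd * (1 + (d:ℝ) * (δ * Real.log N))) / d := by
    field_simp
  rw [hT]
  exact hgen _ _

theorem ellN_convolution_bound (d : ℕ) (hd : 2 ≤ d) (δ Cd : ℝ) (hδ : 0 < δ) (hCd : 0 < Cd) :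
    ∃ C > 0, ∀ N : ℕ, 2 ≤ N → ∀ ρ : EuclideanSpace ℝ (Fin d) → ℝ,
      (∀ y, 0 ≤ ρ y) → MemLp ρ 1 volume → MemLp ρ ⊤ volume →
      ∀ x, ∫ y, ellN d N δ Cd (x - y) * ρ y ≤
        C * (1 + Real.log N) * ((eLpNorm ρ 1 volume).toReal + (eLpNorm ρ ⊤ volume).toReal) := by
  set vB : ℝ := (volume (Metric.ball (0 : EuclideanSpace ℝ (Fin d)) 1)).toReal with hvB_def
  have hvB0 : 0 ≤ vB := ENNReal.toReal_nonneg
  refine ⟨vB * Cd * (1 + (d:ℝ) * δ) + Cd, by positivity, ?_⟩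
  intro N hN ρ hρ0 hρ1 hρtop x
  have hN0 : (0:ℝ) < N := by positivity
  have hL0 : 0 ≤ Real.log N := Real.log_nonneg (by exact_mod_cast hN.trans' one_le_two)
  set B1 : ℝ := (eLpNorm ρ 1 volume).toReal with hB1_def
  set S : ℝ := (eLpNorm ρ ⊤ volume).toReal with hS_def
  have hB10 : 0 ≤ B1 := ENNReal.toReal_nonneg
  have hS0 : 0 ≤ S := ENNReal.toReal_nonneg
  have hρint : Integrable ρ volume := memLp_one_iff_integrable.mp hρ1
  have hellmeas : Measurable (ellN d N δ Cd) := by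
    unfold ellN
    exact Measurable.ite (measurableSet_le measurable_const measurable_norm)
      (measurable_const.div (measurable_norm.pow_const d)) measurable_const
  set M : ℝ := Cd * (N:ℝ) ^ ((d:ℝ) * δ) with hM_def
  have haeS : ∀ᵐ y : EuclideanSpace ℝ (Fin d) ∂volume, ρ y ≤ S := by
    have h := ae_le_eLpNormEssSup (f := ρ) (μ := volume)
    have hfin : eLpNormEssSup ρ volume ≠ ⊤ := by
      rw [← eLpNorm_exponent_top]; exact hρtop.2.ne
    filter_upwards [h] with y hy
    have h2 : ((‖ρ y‖₊ : ℝ≥0∞)).toReal ≤ (eLpNormEssSup ρ volume).toReal :=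
      ENNReal.toReal_mono hfin hy
    calc ρ y ≤ ‖ρ y‖ := le_abs_self _
    _ = ((‖ρ y‖₊ : ℝ≥0∞)).toReal := by simp
    _ ≤ S := by rw [hS_def, eLpNorm_exponent_top]; exact h2
  have hellx : Measurable (fun y : EuclideanSpace ℝ (Fin d) => ellN d N δ Cd (x - y)) :=
    hellmeas.comp (measurable_const.sub measurable_id)
  have hfint : Integrable (fun y => ellN d N δ Cd (x - y) * ρ y) volume := by
    apply hρint.bdd_mul (c := M) hellx.aestronglyMeasurable
    refine Filter.Eventually.of_forall fun y => ?_
    rw [Real.norm_eq_abs, abs_of_pos (ellN_pos hCd hN _)]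
    exact ellN_le_M hCd hN _
  set F1 : EuclideanSpace ℝ (Fin d) → ℝ :=
    (Metric.closedBall x 1).indicator (fun y => ellN d N δ Cd (x - y)) with hF1_def
  have hF1int : Integrable F1 volume := by
    apply IntegrableOn.integrable_indicator _ measurableSet_closedBall
    apply Measure.integrableOn_of_bounded (M := M) measure_closedBall_lt_top.ne
      hellx.aestronglyMeasurable
    filter_upwards with y
    rw [Real.norm_eq_abs, abs_of_pos (ellN_pos hCd hN _)]
    exact ellN_le_M hCd hN _
  have hbigint : Integrable (fun y => S * F1 y + Cd * ρ y) volume :=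
    (hF1int.const_mul S).add (hρint.const_mul Cd)
  have hmono : ∀ᵐ y ∂(volume : Measure (EuclideanSpace ℝ (Fin d))),
      ellN d N δ Cd (x - y) * ρ y ≤ S * F1 y + Cd * ρ y := by
    filter_upwards [haeS] with y hyS
    by_cases hy : y ∈ Metric.closedBall x 1
    · have hFy : F1 y = ellN d N δ Cd (x - y) := Set.indicator_of_mem hy _
      rw [hFy]
      have h1 : ellN d N δ Cd (x - y) * ρ y ≤ ellN d N δ Cd (x - y) * S :=
        mul_le_mul_of_nonneg_left hyS (ellN_pos hCd hN _).le
      have h2 : 0 ≤ Cd * ρ y := mul_nonneg hCd.le (hρ0 y)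
      rw [mul_comm S _]
      linarith
    · have hFy : F1 y = 0 := Set.indicator_of_notMem hy _
      have hnorm : 1 ≤ ‖x - y‖ := by
        have h1 : 1 < dist y x := by simpa [Metric.mem_closedBall] using hy
        rw [dist_eq_norm, norm_sub_rev] at h1
        exact h1.le
      have h1 : ellN d N δ Cd (x - y) ≤ Cd := ellN_le_Cd hCd hδ hN _ hnorm
      rw [hFy, mul_zero, zero_add]
      exact mul_le_mul_of_nonneg_right h1 (hρ0 y)
  have hle1 : ∫ y, ellN d N δ Cd (x - y) * ρ y ≤ ∫ y, (S * F1 y + Cd * ρ y) :=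
    integral_mono_ae hfint hbigint hmono
  have hsplit : ∫ y, (S * F1 y + Cd * ρ y) = S * (∫ y, F1 y) + Cd * (∫ y, ρ y) := by
    rw [integral_add (hF1int.const_mul S) (hρint.const_mul Cd),
      integral_const_mul, integral_const_mul]
  have hF1eq : ∫ y, F1 y = vB * (Cd * (1 + (d:ℝ) * (δ * Real.log N))) := by
    have hptwise : ∀ y, F1 y =
        ((Metric.closedBall (0 : EuclideanSpace ℝ (Fin d)) 1).indicator
          (ellN d N δ Cd)) (x - y) := by
      intro y
      have hmem : y ∈ Metric.closedBall x 1 ↔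
          x - y ∈ Metric.closedBall (0 : EuclideanSpace ℝ (Fin d)) 1 := by
        rw [mem_closedBall_zero_iff, Metric.mem_closedBall, dist_eq_norm, norm_sub_rev]
      by_cases hy : y ∈ Metric.closedBall x 1
      · rw [hF1_def, Set.indicator_of_mem hy, Set.indicator_of_mem (hmem.mp hy)]
      · rw [hF1_def, Set.indicator_of_notMem hy,
          Set.indicator_of_notMem (fun h => hy (hmem.mpr h))]
    simp_rw [hptwise]
    rw [integral_sub_left_eq_self
      ((Metric.closedBall (0 : EuclideanSpace ℝ (Fin d)) 1).indicator (ellN d N δ Cd))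
      volume x]
    rw [integral_indicator measurableSet_closedBall]
    exact ellN_ball_integral d N hd δ Cd hδ hCd hN
  have hρeq : ∫ y, ρ y = B1 := by
    have h2 : eLpNorm ρ 1 volume = ENNReal.ofReal (∫ y, ‖ρ y‖) := by
      rw [eLpNorm_one_eq_lintegral_enorm, ← ofReal_integral_norm_eq_lintegral_enorm hρint]
    have h3 : ∫ y, ‖ρ y‖ = ∫ y, ρ y := by
      apply integral_congr_ae
      filter_upwards with y
      rw [Real.norm_eq_abs, abs_of_nonneg (hρ0 y)]
    rw [hB1_def, h2, ENNReal.toReal_ofReal (integral_nonneg fun y => norm_nonneg _), h3]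
  rw [hsplit, hF1eq, hρeq] at hle1
  refine hle1.trans ?_
  have hdδ : 0 ≤ (d:ℝ) * δ := by positivity
  nlinarith [mul_nonneg hS0 hL0, mul_nonneg hB10 hL0,
    mul_nonneg (mul_nonneg hvB0 hCd.le) hS0,
    mul_nonneg (mul_nonneg hvB0 hCd.le) hB10,
    mul_nonneg (mul_nonneg (mul_nonneg hvB0 hCd.le) hdδ) (mul_nonneg hB10 hL0),
    mul_nonneg (mul_nonneg (mul_nonneg hvB0 hCd.le) hdδ) hB10,
    mul_nonneg (mul_nonneg (mul_nonneg hvB0 hCd.le) hdδ) hS0,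
    mul_nonneg (mul_nonneg hvB0 hCd.le) (mul_nonneg hB10 hL0),
    mul_nonneg (mul_nonneg hvB0 hCd.le) (mul_nonneg hS0 hL0),
    mul_nonneg hCd.le (mul_nonneg hB10 hL0),
    mul_nonneg hCd.le (mul_nonneg hS0 hL0),
    mul_nonneg hCd.le hS0]
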